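/- Let V_AB be a bipartite QCM with extension γ_ABE (i.e., the AB block of γ_ABE equals V_AB), and let Γ_E be a QCM on E. Define W_AB := (γ_ABE + 0_AB ⊕ Γ_E)/(γ_E + Γ_E). Then λ_max(V_AB)^{-1} I ≤ Ω_AB^T V_AB^{-1} Ω_AB ≤ W_AB ≤ V_AB. -/

import Mathlib

open Matrix ComplexOrder

/-- The standard symplectic form on `m` modes, in the `x|p` block representation. -/
noncomputable def Omg (m : ℕ) : Matrix (Fin m ⊕ Fin m) (Fin m ⊕ Fin m) ℝ :=
  fromBlocks 0 1 (-1) 0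

set_option linter.unusedSectionVars false
set_option maxHeartbeats 2000000

section Helpers

variable {m p : Type*} [Fintype m] [DecidableEq m] [Fintype p] [DecidableEq p]

/-- cast a real vector to a complex vector -/
noncomputable def cV (x : m → ℝ) : m → ℂ := fun i => (x i : ℂ)

lemma dot_base (A : Matrix m m ℝ) (x y : m → ℝ) :
    cV x ⬝ᵥ (A.map Complex.ofReal) *ᵥ cV y = ((x ⬝ᵥ A *ᵥ y : ℝ) : ℂ) := by
  simp [cV, dotProduct, mulVec, Matrix.map_apply]

lemma star_decomp (x y : m → ℝ) :
    star (cV x + Complex.I • cV y) = cV x - Complex.I • cV y := by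
  funext i; simp [cV, Complex.ext_iff]

lemma vec_decomp (z : m → ℂ) :
    z = cV (fun i => (z i).re) + Complex.I • cV (fun i => (z i).im) := by
  funext i; simp [cV, Complex.ext_iff]

lemma qform_expand (A B : Matrix m m ℝ) (x y : m → ℝ) :
    star (cV x + Complex.I • cV y) ⬝ᵥ
      ((A.map Complex.ofReal) - Complex.I • (B.map Complex.ofReal)) *ᵥ (cV x + Complex.I • cV y)
    = ((x ⬝ᵥ A *ᵥ x + y ⬝ᵥ A *ᵥ y + x ⬝ᵥ B *ᵥ y - y ⬝ᵥ B *ᵥ x : ℝ) : ℂ)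
      + Complex.I * ((x ⬝ᵥ A *ᵥ y - y ⬝ᵥ A *ᵥ x - x ⬝ᵥ B *ᵥ x - y ⬝ᵥ B *ᵥ y : ℝ) : ℂ) := by
  rw [star_decomp]
  simp only [sub_mulVec, mulVec_add, mulVec_smul, smul_mulVec, dotProduct_add,
    dotProduct_sub, sub_dotProduct, smul_dotProduct, dotProduct_smul, dot_base, smul_eq_mul]
  have h3 : (Complex.I)^3 = -Complex.I := by
    rw [pow_succ, Complex.I_sq]; ring
  push_cast
  ring_nf
  rw [h3, Complex.I_sq]
  ring

lemma symm_dot {A : Matrix m m ℝ} (hA : A.IsSymm) (x y : m → ℝ) :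
    x ⬝ᵥ A *ᵥ y = y ⬝ᵥ A *ᵥ x := by
  rw [dotProduct_mulVec, dotProduct_comm, ← mulVec_transpose, hA.eq]

lemma qform_re {A B : Matrix m m ℝ}
    (h : ((A.map Complex.ofReal) - Complex.I • (B.map Complex.ofReal)).PosSemidef)
    (x y : m → ℝ) :
    0 ≤ x ⬝ᵥ A *ᵥ x + y ⬝ᵥ A *ᵥ y + x ⬝ᵥ B *ᵥ y - y ⬝ᵥ B *ᵥ x := by
  have h2 := h.dotProduct_mulVec_nonneg (cV x + Complex.I • cV y)
  rw [qform_expand] at h2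
  rw [Complex.le_def] at h2
  simpa using h2.1

lemma isHermitian_iff_isSymm' {A : Matrix m m ℝ} : A.IsHermitian ↔ A.IsSymm := by
  constructor <;> intro h <;> exact h

lemma real_psd {A B : Matrix m m ℝ} (hA : A.IsSymm)
    (h : ((A.map Complex.ofReal) - Complex.I • (B.map Complex.ofReal)).PosSemidef) :
    A.PosSemidef := by
  refine .of_dotProduct_mulVec_nonneg (isHermitian_iff_isSymm'.mpr hA) fun x => ?_
  have := qform_re h x 0
  simpa using this

lemma real_psd' {A : Matrix m m ℝ} (hA : A.IsSymm)
    (h : (A.map Complex.ofReal).PosSemidef) : A.PosSemidef := by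
  refine real_psd (B := 0) hA ?_
  have h0 : ((0 : Matrix m m ℝ).map Complex.ofReal) = 0 := by
    ext i j; simp
  rw [h0]
  simpa using h

lemma map_hermitian {A : Matrix m m ℝ} (hA : A.IsSymm) :
    (A.map Complex.ofReal).IsHermitian := by
  have h := Matrix.conjTranspose_map (A := A) Complex.ofReal
    (fun a => (Complex.conj_ofReal a).symm)
  rw [Matrix.IsHermitian, ← h]
  have h2 : Aᴴ = A := hA
  rw [h2]

lemma map_psd {A : Matrix m m ℝ} (hA : A.PosSemidef) :
    (A.map Complex.ofReal).PosSemidef := by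
  have hsymm : A.IsSymm := isHermitian_iff_isSymm'.mp hA.1
  refine .of_dotProduct_mulVec_nonneg (map_hermitian hsymm) fun z => ?_
  have hq0 := qform_expand A 0 (fun i => (z i).re) (fun i => (z i).im)
  rw [vec_decomp z]
  have hexp := qform_expand A 0 (fun i => (z i).re) (fun i => (z i).im)
  simp only [show ((0 : Matrix m m ℝ).map Complex.ofReal) = 0 from by ext i j; simp,
    smul_zero, sub_zero, Matrix.zero_mulVec, dotProduct_zero, zero_dotProduct,
    Complex.ofReal_zero, add_zero, sub_zero] at hexp
  rw [hexp, symm_dot hsymm (fun i => (z i).re) (fun i => (z i).im), sub_self]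
  simp only [Complex.ofReal_zero, mul_zero, add_zero]
  rw [Complex.zero_le_real]
  exact add_nonneg (hA.dotProduct_mulVec_nonneg _) (hA.dotProduct_mulVec_nonneg _)

lemma map_pd {A : Matrix m m ℝ} (hA : A.PosDef) :
    (A.map Complex.ofReal).PosDef := by
  have hsymm : A.IsSymm := isHermitian_iff_isSymm'.mp hA.1
  refine .of_dotProduct_mulVec_pos (map_hermitian hsymm) fun z hz => ?_
  have hexp := qform_expand A 0 (fun i => (z i).re) (fun i => (z i).im)
  simp only [show ((0 : Matrix m m ℝ).map Complex.ofReal) = 0 from by ext i j; simp,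
    smul_zero, sub_zero, Matrix.zero_mulVec, dotProduct_zero, zero_dotProduct,
    Complex.ofReal_zero, add_zero, sub_zero] at hexp
  rw [vec_decomp z, hexp, symm_dot hsymm (fun i => (z i).re) (fun i => (z i).im), sub_self]
  simp only [Complex.ofReal_zero, mul_zero, add_zero]
  rw [Complex.zero_lt_real]
  set x : m → ℝ := fun i => (z i).re
  set y : m → ℝ := fun i => (z i).im
  have hxy : x ≠ 0 ∨ y ≠ 0 := by
    by_contra hc
    push_neg at hc
    apply hz
    funext i
    have h1 := congrFun hc.1 i
    have h2 := congrFun hc.2 i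
    simp only [Pi.zero_apply] at h1 h2
    exact Complex.ext h1 h2
  rcases hxy with hx | hy
  · exact lt_of_lt_of_le (hA.dotProduct_mulVec_pos hx) (le_add_of_nonneg_right (hA.posSemidef.dotProduct_mulVec_nonneg y))
  · exact lt_of_lt_of_le (hA.dotProduct_mulVec_pos hy) (le_add_of_nonneg_left (hA.posSemidef.dotProduct_mulVec_nonneg x))

lemma dot_self_pos {v : m → ℝ} (hv : v ≠ 0) : 0 < v ⬝ᵥ v := by
  have h0 : 0 ≤ v ⬝ᵥ v := by
    simpa using dotProduct_star_self_nonneg v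
  rcases h0.lt_or_eq with h | h
  · exact h
  · exact absurd ((dotProduct_self_eq_zero).mp h.symm) hv

lemma posdef_of_qcm {A B : Matrix m m ℝ} (hAs : A.IsSymm) (hBt : Bᵀ = -B)
    (hBker : ∀ x, B *ᵥ x = 0 → x = 0)
    (h : ((A.map Complex.ofReal) - Complex.I • (B.map Complex.ofReal)).PosSemidef) :
    A.PosDef := by
  have hApsd : A.PosSemidef := real_psd hAs h
  refine .of_dotProduct_mulVec_pos hApsd.1 fun x hx => ?_
  rcases (hApsd.dotProduct_mulVec_nonneg x).lt_or_eq with hlt | heq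
  · simpa using hlt
  · exfalso
    have hAx : A *ᵥ x = 0 := by
      have := (hApsd.dotProduct_mulVec_zero_iff x).mp (by simpa using heq.symm)
      simpa using this
    set v := B *ᵥ x with hv
    have hvne : v ≠ 0 := fun h0 => hx (hBker x h0)
    have hd : 0 < v ⬝ᵥ v := dot_self_pos hvne
    have hc : 0 ≤ v ⬝ᵥ A *ᵥ v := by simpa using hApsd.dotProduct_mulVec_nonneg v
    set c := v ⬝ᵥ A *ᵥ v
    set d := v ⬝ᵥ v
    have hxBv : x ⬝ᵥ B *ᵥ v = -d := by
      rw [dotProduct_mulVec, ← mulVec_transpose, hBt, neg_mulVec, neg_dotProduct]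
    have hvBx : v ⬝ᵥ B *ᵥ x = d := rfl
    set t : ℝ := d / (c + 1) with ht
    have htpos : 0 < t := div_pos hd (by linarith)
    have key := qform_re h x (t • v)
    simp only [mulVec_smul, dotProduct_smul, smul_dotProduct, smul_eq_mul] at key
    have hxAx : x ⬝ᵥ A *ᵥ x = 0 := by simpa using heq.symm
    rw [hxAx, hxBv, hvBx] at key
    have htc : t * (c + 1) = d := by
      rw [ht, div_mul_cancel₀ _ (by linarith : c + 1 ≠ 0)]
    nlinarith

lemma map_inv' (K : Matrix m m ℝ) : K⁻¹.map Complex.ofReal = (K.map Complex.ofReal)⁻¹ := by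
  have hmap : ∀ (M : Matrix m m ℝ), M.map Complex.ofReal = Complex.ofRealHom.mapMatrix M :=
    fun M => rfl
  rw [Matrix.inv_def, Matrix.inv_def]
  have hdet : (K.map Complex.ofReal).det = ((K.det : ℝ) : ℂ) := by
    rw [hmap, ← RingHom.map_det]; rfl
  have hadj : (K.map Complex.ofReal).adjugate = K.adjugate.map Complex.ofReal := by
    rw [hmap, hmap, ← RingHom.map_adjugate]
  rw [hdet, hadj]
  ext i j
  simp [Matrix.map_apply, Matrix.smul_apply]

lemma map_mul' {q : Type*} [Fintype p] (A : Matrix m p ℝ) (B : Matrix p q ℝ) :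
    (A * B).map Complex.ofReal = A.map Complex.ofReal * B.map Complex.ofReal :=
  Matrix.map_mul (f := Complex.ofRealHom)

lemma mmap_sub (A B : Matrix m p ℝ) :
    (A - B).map Complex.ofReal = A.map Complex.ofReal - B.map Complex.ofReal := by
  ext i j; simp

lemma map_add' (A B : Matrix m p ℝ) :
    (A + B).map Complex.ofReal = A.map Complex.ofReal + B.map Complex.ofReal := by
  ext i j; simp

lemma map_neg' (A : Matrix m p ℝ) :
    (-A).map Complex.ofReal = -(A.map Complex.ofReal) := by
  ext i j; simp

lemma map_ct' (A : Matrix m p ℝ) :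
    (A.map Complex.ofReal)ᴴ = Aᵀ.map Complex.ofReal := by
  have h := Matrix.conjTranspose_map (A := A) Complex.ofReal
    (fun a => (Complex.conj_ofReal a).symm)
  rw [← h]
  rfl

lemma psd_smul_real {M : Matrix m m ℂ} (h : M.PosSemidef) {c : ℝ} (hc : 0 ≤ c) :
    (((c : ℂ)) • M).PosSemidef := by
  rw [posSemidef_iff_dotProduct_mulVec]
  constructor
  · unfold Matrix.IsHermitian
    rw [conjTranspose_smul, h.1.eq]
    congr 1
    simp [Complex.ext_iff]
  · intro x
    have h2 := h.dotProduct_mulVec_nonneg x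
    rw [smul_mulVec, dotProduct_smul]
    rw [Complex.le_def] at h2 ⊢
    simp only [Complex.zero_re, Complex.zero_im] at h2 ⊢
    refine ⟨?_, ?_⟩
    · rw [smul_eq_mul, Complex.mul_re, Complex.ofReal_re, Complex.ofReal_im, ← h2.2]
      simpa using mul_nonneg hc h2.1
    · rw [smul_eq_mul, Complex.mul_im, Complex.ofReal_re, Complex.ofReal_im, ← h2.2]
      ring

lemma psd_corner22 {P : Matrix p p ℂ} (hP : P.PosSemidef) :
    (fromBlocks (0 : Matrix m m ℂ) 0 0 P).PosSemidef := by
  rw [posSemidef_iff_dotProduct_mulVec]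
  constructor
  · unfold Matrix.IsHermitian
    rw [fromBlocks_conjTranspose]
    simp [hP.1.eq]
  · intro z
    have := hP.dotProduct_mulVec_nonneg (z ∘ Sum.inr)
    have hz : z = Sum.elim (z ∘ Sum.inl) (z ∘ Sum.inr) := by
      funext i; cases i <;> rfl
    rw [hz, fromBlocks_mulVec, Function.star_sumElim, sumElim_dotProduct_sumElim]
    simpa using this

lemma inv_antitone {A B : Matrix m m ℝ} (hB : B.PosDef) (hAB : (A - B).PosSemidef) :
    (B⁻¹ - A⁻¹).PosSemidef := by
  have hA : A.PosDef := by
    have : A = B + (A - B) := by abel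
    rw [this]
    exact hB.add_posSemidef hAB
  haveI : Invertible B := hB.isUnit.invertible
  haveI : Invertible A := hA.isUnit.invertible
  haveI : Invertible B⁻¹ := hB.inv.isUnit.invertible
  have hM : (fromBlocks A (1 : Matrix m m ℝ) (1 : Matrix m m ℝ)ᴴ B⁻¹).PosSemidef := by
    rw [Matrix.PosDef.fromBlocks₂₂ _ _ hB.inv]
    have heq : A - 1 * (B⁻¹)⁻¹ * (1 : Matrix m m ℝ)ᴴ = A - B := by
      rw [Matrix.nonsing_inv_nonsing_inv _ ((Matrix.isUnit_iff_isUnit_det _).mp hB.isUnit)]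
      simp
    rw [heq]
    exact hAB
  have h2 := (Matrix.PosDef.fromBlocks₁₁ (1 : Matrix m m ℝ) B⁻¹ hA).mp hM
  have heq2 : B⁻¹ - (1 : Matrix m m ℝ)ᴴ * A⁻¹ * 1 = B⁻¹ - A⁻¹ := by simp
  rwa [heq2] at h2

lemma doubling_psd {W O : Matrix m m ℂ} (h1 : (W - O).PosSemidef) (h2 : (W + O).PosSemidef) :
    (fromBlocks W O O W).PosSemidef := by
  set R1 : Matrix (m ⊕ m) m ℂ := fromRows 1 1
  set R2 : Matrix (m ⊕ m) m ℂ := fromRows 1 (-1)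
  have htwo : ∀ (M : Matrix (m ⊕ m) (m ⊕ m) ℂ), True := fun _ => trivial
  have htwo' : ∀ (M : Matrix m m ℂ), ((2:ℝ):ℂ) • M = M + M := fun M => by
    rw [show ((2:ℝ):ℂ) = (1+1:ℂ) by norm_num, add_smul, one_smul]
  have hR1H : R1ᴴ = fromCols 1 1 := by
    simp [R1, conjTranspose_fromRows_eq_fromCols_conjTranspose]
  have hR2H : R2ᴴ = fromCols 1 (-1) := by
    simp [R2, conjTranspose_fromRows_eq_fromCols_conjTranspose]
  have hX : R1 * (W + O) * R1ᴴ + R2 * (W - O) * R2ᴴ = ((2:ℝ):ℂ) • fromBlocks W O O W := by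
    rw [hR1H, hR2H]
    show fromRows 1 1 * (W + O) * fromCols 1 1
        + fromRows 1 (-1) * (W - O) * fromCols 1 (-1) = _
    rw [fromRows_mul, fromRows_mul_fromCols, fromRows_mul, fromRows_mul_fromCols,
      fromBlocks_add, fromBlocks_smul]
    congr 1 <;> (simp only [one_mul, mul_one, neg_mul, mul_neg, neg_neg, htwo']; abel)
  have hsum : (R1 * (W + O) * R1ᴴ + R2 * (W - O) * R2ᴴ).PosSemidef :=
    (h2.mul_mul_conjTranspose_same R1).add (h1.mul_mul_conjTranspose_same R2)
  have hres := psd_smul_real (hX ▸ hsum) (c := 2⁻¹) (by norm_num)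
  have h2inv : (((2⁻¹:ℝ):ℂ)) • (((2:ℝ):ℂ) • fromBlocks W O O W) = fromBlocks W O O W := by
    rw [smul_smul]
    norm_num
  rwa [h2inv] at hres

lemma smul_one_posdef {c : ℝ} (hc : 0 < c) : (c • (1 : Matrix m m ℝ)).PosDef := by
  rw [smul_one_eq_diagonal]
  exact (posDef_diagonal_iff).mpr fun i => hc

lemma smul_one_inv {c : ℝ} (hc : c ≠ 0) :
    (c • (1 : Matrix m m ℝ))⁻¹ = c⁻¹ • (1 : Matrix m m ℝ) := by
  apply Matrix.inv_eq_left_inv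
  rw [Matrix.smul_mul, Matrix.mul_smul, smul_smul, one_mul, inv_mul_cancel₀ hc, one_smul]

lemma sup_smul_one_sub_psd [Nonempty m] {V : Matrix m m ℝ} (hV : V.IsHermitian) :
    ((⨆ i, hV.eigenvalues i) • (1 : Matrix m m ℝ) - V).PosSemidef := by
  set lam := ⨆ i, hV.eigenvalues i with hlam
  have hle : ∀ i, hV.eigenvalues i ≤ lam := fun i =>
    le_ciSup (Set.Finite.bddAbove (Set.finite_range _)) i
  set U : Matrix m m ℝ := (hV.eigenvectorUnitary : Matrix m m ℝ) with hU
  have hUU : U * star U = 1 := (Matrix.mem_unitaryGroup_iff).mp hV.eigenvectorUnitary.2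
  have hspec := hV.spectral_theorem
  rw [Unitary.conjStarAlgAut_apply] at hspec
  have key : lam • (1 : Matrix m m ℝ) - V
      = U * diagonal (fun i => lam - hV.eigenvalues i) * star U := by
    calc lam • (1 : Matrix m m ℝ) - V
        = U * (lam • 1) * star U - U * diagonal (RCLike.ofReal ∘ hV.eigenvalues) * star U := by
          rw [← hspec]
          congr 1
          rw [Matrix.mul_smul, Matrix.smul_mul, mul_one, hUU]
      _ = U * (lam • 1 - diagonal (RCLike.ofReal ∘ hV.eigenvalues)) * star U := by
          rw [Matrix.mul_sub, Matrix.sub_mul]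
      _ = U * diagonal (fun i => lam - hV.eigenvalues i) * star U := by
          congr 1
          rw [smul_one_eq_diagonal, diagonal_sub]
          rfl
  rw [key]
  have hdiag : (diagonal (fun i => lam - hV.eigenvalues i)).PosSemidef :=
    posSemidef_diagonal_iff.mpr fun i => sub_nonneg.mpr (hle i)
  have := hdiag.mul_mul_conjTranspose_same U
  rwa [← Matrix.star_eq_conjTranspose] at this

lemma Omg_transpose (n : ℕ) : (Omg n)ᵀ = -(Omg n) := by
  simp [Omg, fromBlocks_transpose, fromBlocks_neg]

lemma Omg_mul_self (n : ℕ) : Omg n * Omg n = -1 := by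
  simp [Omg, fromBlocks_multiply]
  rw [← fromBlocks_one, fromBlocks_neg]
  simp

lemma Omg_tmul (n : ℕ) : (Omg n)ᵀ * Omg n = 1 := by
  rw [Omg_transpose, neg_mul, Omg_mul_self, neg_neg]

lemma Omg_ker (n : ℕ) (x : Fin n ⊕ Fin n → ℝ) (h : Omg n *ᵥ x = 0) : x = 0 := by
  have h2 : (Omg n)ᵀ *ᵥ (Omg n *ᵥ x) = x := by
    rw [mulVec_mulVec, Omg_tmul, one_mulVec]
  rw [h, mulVec_zero] at h2
  exact h2.symm

end Helpers

/-- Let `V_AB` be a QCM with extension `γ_ABE` (its `AB` block equals `V_AB`) and let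
`Γ_E` be a QCM on `E`. For `W_AB := (γ_ABE + 0 ⊕ Γ_E)/(γ_E + Γ_E)` one has
`λ_max(V_AB)⁻¹ 1 ≤ Ω_ABᵀ V_AB⁻¹ Ω_AB ≤ W_AB ≤ V_AB` (Loewner order). -/
theorem measured_qcm_sandwich {n k : ℕ} [NeZero n]
    (γ : Matrix ((Fin n ⊕ Fin n) ⊕ (Fin k ⊕ Fin k)) ((Fin n ⊕ Fin n) ⊕ (Fin k ⊕ Fin k)) ℝ)
    (V : Matrix (Fin n ⊕ Fin n) (Fin n ⊕ Fin n) ℝ)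
    (ΓE : Matrix (Fin k ⊕ Fin k) (Fin k ⊕ Fin k) ℝ)
    (hγs : γ.IsSymm)
    (hγ : ((γ.map Complex.ofReal) -
      Complex.I • (fromBlocks (Omg n) 0 0 (Omg k)).map Complex.ofReal).PosSemidef)
    (hext : γ.toBlocks₁₁ = V)
    (hV : V.IsHermitian)
    (hΓs : ΓE.IsSymm)
    (hΓ : ((ΓE.map Complex.ofReal) - Complex.I • (Omg k).map Complex.ofReal).PosSemidef) :
    ((Omg n)ᵀ * V⁻¹ * Omg n
        - (⨆ i, hV.eigenvalues i)⁻¹ • (1 : Matrix (Fin n ⊕ Fin n) (Fin n ⊕ Fin n) ℝ)).PosSemidef ∧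
    ((γ.toBlocks₁₁ - γ.toBlocks₁₂ * (γ.toBlocks₂₂ + ΓE)⁻¹ * γ.toBlocks₂₁)
        - (Omg n)ᵀ * V⁻¹ * Omg n).PosSemidef ∧
    (V - (γ.toBlocks₁₁ - γ.toBlocks₁₂ * (γ.toBlocks₂₂ + ΓE)⁻¹ * γ.toBlocks₂₁)).PosSemidef := by
  classical
  subst hext
  -- symmetry of blocks
  have hVs : (γ.toBlocks₁₁).IsSymm := by
    ext i j
    simp only [Matrix.transpose_apply, Matrix.toBlocks₁₁, Matrix.of_apply]
    exact congrFun (congrFun hγs (Sum.inl i)) (Sum.inl j)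
  have hG22s : (γ.toBlocks₂₂).IsSymm := by
    ext i j
    simp only [Matrix.transpose_apply, Matrix.toBlocks₂₂, Matrix.of_apply]
    exact congrFun (congrFun hγs (Sum.inr i)) (Sum.inr j)
  have hG21 : γ.toBlocks₂₁ = (γ.toBlocks₁₂)ᵀ := by
    ext i j
    simp only [Matrix.transpose_apply, Matrix.toBlocks₂₁, Matrix.toBlocks₁₂, Matrix.of_apply]
    exact (congrFun (congrFun hγs (Sum.inr i)) (Sum.inl j)).symm
  -- block splitting of the QCM condition
  have hsplit : (γ.map Complex.ofReal -
        Complex.I • (fromBlocks (Omg n) 0 0 (Omg k)).map Complex.ofReal)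
      = fromBlocks
          (γ.toBlocks₁₁.map Complex.ofReal - Complex.I • (Omg n).map Complex.ofReal)
          (γ.toBlocks₁₂.map Complex.ofReal) (γ.toBlocks₂₁.map Complex.ofReal)
          (γ.toBlocks₂₂.map Complex.ofReal - Complex.I • (Omg k).map Complex.ofReal) := by
    ext i j
    cases i <;> cases j <;>
      simp [Matrix.toBlocks₁₁, Matrix.toBlocks₁₂, Matrix.toBlocks₂₁, Matrix.toBlocks₂₂,
        Matrix.map_apply, Matrix.fromBlocks]
  have hγ' := hγ
  rw [hsplit] at hγ'
  have hVqcm : (γ.toBlocks₁₁.map Complex.ofReal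
      - Complex.I • (Omg n).map Complex.ofReal).PosSemidef := by
    have h2 := hγ'.submatrix Sum.inl
    exact h2
  have hG22qcm : (γ.toBlocks₂₂.map Complex.ofReal
      - Complex.I • (Omg k).map Complex.ofReal).PosSemidef := by
    have h2 := hγ'.submatrix Sum.inr
    exact h2
  have hVpd : (γ.toBlocks₁₁).PosDef :=
    posdef_of_qcm hVs (Omg_transpose n) (Omg_ker n) hVqcm
  set K := γ.toBlocks₂₂ + ΓE with hKdef
  have hKs : K.IsSymm := by
    show Kᵀ = K
    rw [hKdef, transpose_add, hG22s.eq, hΓs.eq]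
  have hKqcm : (K.map Complex.ofReal
      - Complex.I • (((2:ℝ) • Omg k).map Complex.ofReal)).PosSemidef := by
    have e : K.map Complex.ofReal - Complex.I • (((2:ℝ) • Omg k).map Complex.ofReal)
        = (γ.toBlocks₂₂.map Complex.ofReal - Complex.I • (Omg k).map Complex.ofReal)
          + (ΓE.map Complex.ofReal - Complex.I • (Omg k).map Complex.ofReal) := by
      ext i j
      simp only [hKdef, Matrix.sub_apply, Matrix.add_apply, Matrix.smul_apply,
        Matrix.map_apply, smul_eq_mul]
      push_cast
      ring
    rw [e]
    exact hG22qcm.add hΓ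
  have h2Ωt : ((2:ℝ) • Omg k)ᵀ = -((2:ℝ) • Omg k) := by
    rw [transpose_smul, Omg_transpose, smul_neg]
  have h2Ωker : ∀ x, ((2:ℝ) • Omg k) *ᵥ x = 0 → x = 0 := by
    intro x hx
    apply Omg_ker k
    have h2 : (2:ℝ) • (Omg k *ᵥ x) = 0 := by
      rwa [← smul_mulVec]
    have := smul_eq_zero.mp h2
    rcases this with h | h
    · norm_num at h
    · exact h
  have hKpd : K.PosDef := posdef_of_qcm hKs h2Ωt h2Ωker hKqcm
  have hKcpd : (K.map Complex.ofReal).PosDef := map_pd hKpd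
  haveI : Invertible (K.map Complex.ofReal) := hKcpd.isUnit.invertible
  -- the shifted extension matrix is PSD
  have hΓplus : (ΓE.map Complex.ofReal + Complex.I • (Omg k).map Complex.ofReal).PosSemidef := by
    have h := hΓ.transpose
    have e : (ΓE.map Complex.ofReal - Complex.I • (Omg k).map Complex.ofReal)ᵀ
        = ΓE.map Complex.ofReal + Complex.I • (Omg k).map Complex.ofReal := by
      ext i j
      simp only [Matrix.transpose_apply, Matrix.sub_apply, Matrix.add_apply,
        Matrix.smul_apply, Matrix.map_apply, smul_eq_mul]
      have hgij : ΓE j i = ΓE i j := congrFun (congrFun hΓs i) j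
      have hoij : Omg k j i = -(Omg k i j) := by
        have := congrFun (congrFun (Omg_transpose k) i) j
        simpa using this
      rw [hgij, hoij]
      push_cast
      ring
    rwa [e] at h
  have hbig : (fromBlocks
      (γ.toBlocks₁₁.map Complex.ofReal - Complex.I • (Omg n).map Complex.ofReal)
      (γ.toBlocks₁₂.map Complex.ofReal) ((γ.toBlocks₁₂.map Complex.ofReal)ᴴ)
      (K.map Complex.ofReal)).PosSemidef := by
    have hsum := hγ'.add (psd_corner22 (m := Fin n ⊕ Fin n) hΓplus)
    have e : fromBlocks
          (γ.toBlocks₁₁.map Complex.ofReal - Complex.I • (Omg n).map Complex.ofReal)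
          (γ.toBlocks₁₂.map Complex.ofReal) (γ.toBlocks₂₁.map Complex.ofReal)
          (γ.toBlocks₂₂.map Complex.ofReal - Complex.I • (Omg k).map Complex.ofReal)
        + fromBlocks 0 0 0 (ΓE.map Complex.ofReal + Complex.I • (Omg k).map Complex.ofReal)
        = fromBlocks
          (γ.toBlocks₁₁.map Complex.ofReal - Complex.I • (Omg n).map Complex.ofReal)
          (γ.toBlocks₁₂.map Complex.ofReal) ((γ.toBlocks₁₂.map Complex.ofReal)ᴴ)
          (K.map Complex.ofReal) := by
      rw [fromBlocks_add, Matrix.fromBlocks_inj]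
      refine ⟨by rw [add_zero], by rw [add_zero], ?_, ?_⟩
      · rw [add_zero, map_ct', hG21]
      · rw [hKdef, map_add']
        abel
    rwa [e] at hsum
  have hschur := (Matrix.PosDef.fromBlocks₂₂ _ _ hKcpd).mp hbig
  set WR := γ.toBlocks₁₁ - γ.toBlocks₁₂ * K⁻¹ * γ.toBlocks₂₁ with hWRdef
  have hWqcm : (WR.map Complex.ofReal - Complex.I • (Omg n).map Complex.ofReal).PosSemidef := by
    have e : (γ.toBlocks₁₁.map Complex.ofReal - Complex.I • (Omg n).map Complex.ofReal)
          - γ.toBlocks₁₂.map Complex.ofReal * (K.map Complex.ofReal)⁻¹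
            * (γ.toBlocks₁₂.map Complex.ofReal)ᴴ
        = WR.map Complex.ofReal - Complex.I • (Omg n).map Complex.ofReal := by
      rw [map_ct', ← hG21, ← map_inv', ← map_mul', ← map_mul', hWRdef, mmap_sub,
        sub_right_comm]
      
    rwa [e] at hschur
  have hWs : WR.IsSymm := by
    show WRᵀ = WR
    rw [hWRdef, transpose_sub, transpose_mul, transpose_mul, transpose_nonsing_inv,
      hKs.eq, hG21, transpose_transpose, hVs.eq, Matrix.mul_assoc]
  have hWpd : WR.PosDef := posdef_of_qcm hWs (Omg_transpose n) (Omg_ker n) hWqcm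
  have hWcpd : (WR.map Complex.ofReal).PosDef := map_pd hWpd
  haveI : Invertible (WR.map Complex.ofReal) := hWcpd.isUnit.invertible
  -- Goal 3 : V - W is PSD
  have hgoal3 : (γ.toBlocks₁₁ - WR).PosSemidef := by
    have e : γ.toBlocks₁₁ - WR = γ.toBlocks₁₂ * K⁻¹ * γ.toBlocks₂₁ := by
      rw [hWRdef, sub_sub_cancel]
    have hpsd := (hKpd.inv.posSemidef).mul_mul_conjTranspose_same (γ.toBlocks₁₂)
    have e2 : (γ.toBlocks₁₂)ᴴ = γ.toBlocks₂₁ := by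
      rw [hG21]; rfl
    rw [e2] at hpsd
    rwa [e]
  -- W ≥ Ωᵀ W⁻¹ Ω
  have hWplus : (WR.map Complex.ofReal + Complex.I • (Omg n).map Complex.ofReal).PosSemidef := by
    have h := hWqcm.transpose
    have e : (WR.map Complex.ofReal - Complex.I • (Omg n).map Complex.ofReal)ᵀ
        = WR.map Complex.ofReal + Complex.I • (Omg n).map Complex.ofReal := by
      ext i j
      simp only [Matrix.transpose_apply, Matrix.sub_apply, Matrix.add_apply,
        Matrix.smul_apply, Matrix.map_apply, smul_eq_mul]
      have hwij : WR j i = WR i j := congrFun (congrFun hWs i) j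
      have hoij : Omg n j i = -(Omg n i j) := by
        have := congrFun (congrFun (Omg_transpose n) i) j
        simpa using this
      rw [hwij, hoij]
      push_cast
      ring
    rwa [e] at h
  have hOH : (Complex.I • (Omg n).map Complex.ofReal)ᴴ
      = Complex.I • (Omg n).map Complex.ofReal := by
    rw [conjTranspose_smul, map_ct', Omg_transpose]
    have e : ((-(Omg n)).map Complex.ofReal) = -((Omg n).map Complex.ofReal) := by
      ext i j; simp
    rw [e]
    simp [Complex.star_def, Complex.conj_I]
  have hX : (fromBlocks (WR.map Complex.ofReal) (Complex.I • (Omg n).map Complex.ofReal)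
      ((Complex.I • (Omg n).map Complex.ofReal)ᴴ) (WR.map Complex.ofReal)).PosSemidef := by
    rw [hOH]
    exact doubling_psd hWqcm hWplus
  have hs2 := (Matrix.PosDef.fromBlocks₂₂ _ _ hWcpd).mp hX
  have hWW : (WR - (Omg n)ᵀ * WR⁻¹ * Omg n).PosSemidef := by
    have e : (Complex.I • (Omg n).map Complex.ofReal) * (WR.map Complex.ofReal)⁻¹
          * (Complex.I • (Omg n).map Complex.ofReal)ᴴ
        = ((Omg n)ᵀ * WR⁻¹ * Omg n).map Complex.ofReal := by
      rw [hOH, Matrix.smul_mul, Matrix.smul_mul, Matrix.mul_smul, smul_smul,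
        Complex.I_mul_I, neg_one_smul, Omg_transpose, neg_mul, neg_mul, map_neg',
        map_mul', map_mul', map_inv']
    rw [e, ← mmap_sub] at hs2
    apply real_psd' ?_ hs2
    show (WR - (Omg n)ᵀ * WR⁻¹ * Omg n)ᵀ = WR - (Omg n)ᵀ * WR⁻¹ * Omg n
    rw [transpose_sub, transpose_mul, transpose_mul, transpose_transpose,
      transpose_nonsing_inv, hWs.eq, ← Matrix.mul_assoc]
  have hinvWV : (WR⁻¹ - (γ.toBlocks₁₁)⁻¹).PosSemidef := inv_antitone hWpd hgoal3
  have hCC : ((Omg n)ᵀ)ᴴ = Omg n := transpose_transpose (Omg n)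
  have hconj2 := hinvWV.mul_mul_conjTranspose_same ((Omg n)ᵀ)
  rw [hCC] at hconj2
  have hgoal2 : (WR - (Omg n)ᵀ * (γ.toBlocks₁₁)⁻¹ * Omg n).PosSemidef := by
    have e : WR - (Omg n)ᵀ * (γ.toBlocks₁₁)⁻¹ * Omg n
        = (WR - (Omg n)ᵀ * WR⁻¹ * Omg n)
          + ((Omg n)ᵀ * (WR⁻¹ - (γ.toBlocks₁₁)⁻¹) * Omg n) := by
      rw [Matrix.mul_sub, Matrix.sub_mul]
      abel
    rw [e]
    exact hWW.add hconj2
  -- Goal 1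
  haveI : Nonempty (Fin n) := ⟨⟨0, Nat.pos_of_ne_zero (NeZero.ne n)⟩⟩
  set lam := ⨆ i, hV.eigenvalues i with hlamdef
  have hlampos : 0 < lam := by
    obtain ⟨i0⟩ : Nonempty (Fin n ⊕ Fin n) := inferInstance
    have h1 : 0 < hV.eigenvalues i0 := hVpd.eigenvalues_pos i0
    exact lt_of_lt_of_le h1 (le_ciSup (Set.Finite.bddAbove (Set.finite_range _)) i0)
  have hVle := sup_smul_one_sub_psd hV
  have hinvV : ((γ.toBlocks₁₁)⁻¹ - lam⁻¹ • (1 : Matrix (Fin n ⊕ Fin n) (Fin n ⊕ Fin n) ℝ)).PosSemidef := by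
    have h := inv_antitone hVpd hVle
    rwa [smul_one_inv (ne_of_gt hlampos)] at h
  have hconj1 := hinvV.mul_mul_conjTranspose_same ((Omg n)ᵀ)
  rw [hCC] at hconj1
  have hgoal1 : ((Omg n)ᵀ * (γ.toBlocks₁₁)⁻¹ * Omg n - lam⁻¹ • (1 : Matrix (Fin n ⊕ Fin n) (Fin n ⊕ Fin n) ℝ)).PosSemidef := by
    have e : (Omg n)ᵀ * ((γ.toBlocks₁₁)⁻¹ - lam⁻¹ • 1) * Omg n
        = (Omg n)ᵀ * (γ.toBlocks₁₁)⁻¹ * Omg n - lam⁻¹ • (1 : Matrix (Fin n ⊕ Fin n) (Fin n ⊕ Fin n) ℝ) := by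
      rw [Matrix.mul_sub, Matrix.sub_mul, Matrix.mul_smul, Matrix.smul_mul, mul_one, Omg_tmul]
    rwa [e] at hconj1
  exact ⟨hgoal1, hgoal2, hgoal3⟩
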